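/- Let ψ be a t-doped stabilizer state on N qubits, i.e. ψ = C_t T_{i_t} C_{t−1} T_{i_{t−1}} ⋯ C_1 T_{i_1} C_0 (|0⟩^{⊗N}) where each C_j is a Clifford unitary on N qubits and each T_{i_j} is a T gate acting on some qubit i_j. Then the stabilizer group of ψ has cardinality at least 2^{N−t}; equivalently, the stabilizer dimension satisfies k_ψ ≥ N − t. -/
import Mathlib


open Matrix
open scoped ComplexOrder

/-- The four Pauli matrices. -/
noncomputable def pauli : Fin 4 → Matrix (Fin 2) (Fin 2) ℂ
  | 0 => 1
  | 1 => !![0, 1; 1, 0]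
  | 2 => !![0, -Complex.I; Complex.I, 0]
  | 3 => !![1, 0; 0, -1]

/-- The Pauli string `σ^{α 0} ⊗ ⋯ ⊗ σ^{α (N-1)}` as a `2^N × 2^N` matrix,
indexed by computational-basis labels `Fin N → Fin 2`. -/
noncomputable def pauliString {N : ℕ} (α : Fin N → Fin 4) :
    Matrix (Fin N → Fin 2) (Fin N → Fin 2) ℂ :=
  fun s s' => ∏ j, pauli (α j) (s j) (s' j)

/-- The stabilizer group of `ψ`: the Pauli strings of which `ψ` is a `±1` eigenvector. -/
def stabGroup {N : ℕ} (ψ : (Fin N → Fin 2) → ℂ) :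
    Set (Matrix (Fin N → Fin 2) (Fin N → Fin 2) ℂ) :=
  {σ | (∃ α : Fin N → Fin 4, σ = pauliString α) ∧ (σ *ᵥ ψ = ψ ∨ σ *ᵥ ψ = -ψ)}

/-- A unitary `U` is Clifford if it maps every Pauli string to a Pauli string up to a
phase `c ∈ {1, -1, i, -i}` under conjugation. -/
def IsClifford {N : ℕ} (U : Matrix (Fin N → Fin 2) (Fin N → Fin 2) ℂ) : Prop :=
  U ∈ Matrix.unitaryGroup (Fin N → Fin 2) ℂ ∧
  ∀ α : Fin N → Fin 4, ∃ (β : Fin N → Fin 4) (c : ℂ),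
    (c = 1 ∨ c = -1 ∨ c = Complex.I ∨ c = -Complex.I) ∧
    U * pauliString α * Uᴴ = c • pauliString β

/-- The T gate acting on qubit `i`: `I^{⊗(i-1)} ⊗ diag(1, e^{iπ/4}) ⊗ I^{⊗(N-i)}`. -/
noncomputable def Tgate {N : ℕ} (i : Fin N) :
    Matrix (Fin N → Fin 2) (Fin N → Fin 2) ℂ :=
  Matrix.diagonal fun s => if s i = 1 then Complex.exp (Complex.I * Real.pi / 4) else 1

/-- The state `|0⟩^{⊗N}`. -/
def zeroState (N : ℕ) : (Fin N → Fin 2) → ℂ :=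
  fun s => if s = fun _ => 0 then 1 else 0

def pmul : Fin 4 → Fin 4 → Fin 4 :=
  ![![0,1,2,3], ![1,0,3,2], ![2,3,0,1], ![3,2,1,0]]

noncomputable def pphase : Fin 4 → Fin 4 → ℂ :=
  ![![1,1,1,1], ![1,1,Complex.I,-Complex.I],
    ![1,-Complex.I,1,Complex.I], ![1,Complex.I,-Complex.I,1]]

def IsPhase (c : ℂ) : Prop := c = 1 ∨ c = -1 ∨ c = Complex.I ∨ c = -Complex.I

lemma pauli_mul (a b : Fin 4) :
    pauli a * pauli b = pphase a b • pauli (pmul a b) := by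
  fin_cases a <;> fin_cases b <;>
    · ext i j
      fin_cases i <;> fin_cases j <;>
        simp [pauli, pmul, pphase, Matrix.mul_apply, Fin.sum_univ_two, Matrix.one_apply,
          Complex.I_mul_I, Matrix.vecHead, Matrix.vecTail]

lemma pmul_self (a : Fin 4) : pmul a a = 0 := by revert a; decide

lemma pphase_self (a : Fin 4) : pphase a a = 1 := by
  fin_cases a <;> simp [pphase, Matrix.vecHead, Matrix.vecTail]

lemma pmul_eq_zero_iff {a b : Fin 4} : pmul a b = 0 ↔ a = b := by revert a b; decide

lemma isPhase_pphase (a b : Fin 4) : IsPhase (pphase a b) := by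
  fin_cases a <;> fin_cases b <;> simp [pphase, IsPhase, Matrix.vecHead, Matrix.vecTail]

lemma IsPhase.one : IsPhase 1 := Or.inl rfl

lemma IsPhase.mul {c d : ℂ} (hc : IsPhase c) (hd : IsPhase d) : IsPhase (c * d) := by
  rcases hc with h|h|h|h <;> rcases hd with h'|h'|h'|h' <;>
    simp [IsPhase, h, h', Complex.I_mul_I]

lemma IsPhase.ne_zero {c : ℂ} (hc : IsPhase c) : c ≠ 0 := by
  rcases hc with h|h|h|h <;> simp [h, Complex.I_ne_zero]

lemma IsPhase.sq_one {c : ℂ} (hc : IsPhase c) (h : c ^ 2 = 1) : c = 1 ∨ c = -1 := by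
  rcases hc with h'|h'|h'|h'
  · exact Or.inl h'
  · exact Or.inr h'
  · subst h'; rw [Complex.I_sq] at h; norm_num at h
  · subst h'; rw [neg_pow, Complex.I_sq] at h; norm_num at h

lemma trace_pauli (a : Fin 4) : (pauli a).trace = if a = 0 then 2 else 0 := by
  fin_cases a <;> simp [pauli, Matrix.trace_fin_two]

lemma pauli_diag {a : Fin 4} (h : a = 0 ∨ a = 3) {x y : Fin 2} (hxy : x ≠ y) :
    pauli a x y = 0 := by
  rcases h with h|h <;> subst h <;> fin_cases x <;> fin_cases y <;>
    simp_all [pauli, Matrix.one_apply]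

lemma pauli_col_zero {a : Fin 4} (h : a = 0 ∨ a = 3) (x : Fin 2) :
    pauli a x 0 = if x = 0 then 1 else 0 := by
  rcases h with h|h <;> subst h <;> fin_cases x <;> simp [pauli, Matrix.one_apply]

lemma pauliString_apply {N : ℕ} (α : Fin N → Fin 4) (s s' : Fin N → Fin 2) :
    pauliString α s s' = ∏ j, pauli (α j) (s j) (s' j) := rfl

lemma pauliString_mul {N : ℕ} (α β : Fin N → Fin 4) :
    pauliString α * pauliString β
      = (∏ j, pphase (α j) (β j)) • pauliString (fun j => pmul (α j) (β j)) := by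
  ext s s'
  have key : ∀ j : Fin N, (∑ x : Fin 2, pauli (α j) (s j) x * pauli (β j) x (s' j))
      = pphase (α j) (β j) * pauli (pmul (α j) (β j)) (s j) (s' j) := by
    intro j
    have h := congrFun (congrFun (pauli_mul (α j) (β j)) (s j)) (s' j)
    rw [Matrix.mul_apply] at h
    simpa [Matrix.smul_apply, smul_eq_mul] using h
  simp only [Matrix.mul_apply, Matrix.smul_apply, pauliString_apply, smul_eq_mul]
  calc ∑ s'' : Fin N → Fin 2, (∏ j, pauli (α j) (s j) (s'' j)) * ∏ j, pauli (β j) (s'' j) (s' j)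
      = ∑ s'' : Fin N → Fin 2, ∏ j, (pauli (α j) (s j) (s'' j) * pauli (β j) (s'' j) (s' j)) := by
        simp [Finset.prod_mul_distrib]
    _ = ∏ j, ∑ x : Fin 2, pauli (α j) (s j) x * pauli (β j) x (s' j) := by
        rw [Finset.prod_univ_sum]; simp
    _ = ∏ j, (pphase (α j) (β j) * pauli (pmul (α j) (β j)) (s j) (s' j)) := by
        simp only [key]
    _ = _ := Finset.prod_mul_distrib

lemma pauliString_zero {N : ℕ} : pauliString (fun _ : Fin N => (0 : Fin 4)) = 1 := by
  ext s s'
  rw [Matrix.one_apply, pauliString_apply]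
  by_cases h : s = s'
  · subst h; simp [pauli, Matrix.one_apply]
  · simp only [if_neg h]
    obtain ⟨j, hj⟩ := Function.ne_iff.mp h
    exact Finset.prod_eq_zero (Finset.mem_univ j) (by simp [pauli, Matrix.one_apply, hj])

lemma pauliString_sq {N : ℕ} (α : Fin N → Fin 4) :
    pauliString α * pauliString α = 1 := by
  rw [pauliString_mul]
  simp [pmul_self, pphase_self, pauliString_zero]

lemma trace_pauliString {N : ℕ} (α : Fin N → Fin 4) :
    (pauliString α).trace = ∏ j, (pauli (α j)).trace := by
  simp only [Matrix.trace, Matrix.diag, pauliString_apply]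
  rw [Finset.prod_univ_sum]
  simp

lemma isPhase_prod {N : ℕ} (α β : Fin N → Fin 4) :
    IsPhase (∏ j, pphase (α j) (β j)) := by
  classical
  refine Finset.prod_induction _ IsPhase (fun _ _ => IsPhase.mul) IsPhase.one ?_
  exact fun j _ => isPhase_pphase (α j) (β j)

lemma pauliString_rigid {N : ℕ} {α β : Fin N → Fin 4} {c : ℂ}
    (h : pauliString α = c • pauliString β) : α = β ∧ c = 1 := by
  have hc0 : c ≠ 0 := by
    rintro rfl
    have h1 := pauliString_sq α
    rw [h] at h1
    simp at h1
  have hmul := pauliString_mul β α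
  rw [h, Matrix.mul_smul, pauliString_sq] at hmul
  set d := ∏ j, pphase (β j) (α j) with hd
  have htr := congrArg Matrix.trace hmul
  rw [Matrix.trace_smul, Matrix.trace_smul, Matrix.trace_one, trace_pauliString] at htr
  have hcard : (Fintype.card (Fin N → Fin 2) : ℂ) ≠ 0 := by
    simp [Fintype.card_fun]
  have hprod : (∏ j, (pauli (pmul (β j) (α j))).trace) ≠ 0 := by
    intro h0
    rw [h0] at htr
    simp only [smul_eq_mul, mul_zero] at htr
    exact hc0 ((mul_eq_zero.mp htr).resolve_right hcard)
  have hab : α = β := by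
    funext j
    have hj : (pauli (pmul (β j) (α j))).trace ≠ 0 :=
      fun h0 => hprod (Finset.prod_eq_zero (Finset.mem_univ j) h0)
    rw [trace_pauli] at hj
    have : pmul (β j) (α j) = 0 := by by_contra hne; simp [hne] at hj
    exact (pmul_eq_zero_iff.mp this).symm
  subst hab
  refine ⟨rfl, ?_⟩
  have hd1 : d = 1 := by rw [hd]; simp [pphase_self]
  rw [hd1, one_smul] at hmul
  have := congrFun (congrFun hmul (fun _ => 0)) (fun _ => 0)
  simp only [Matrix.smul_apply, Matrix.one_apply_eq, smul_eq_mul, mul_one] at this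
  simp only [pmul_self] at this
  rw [pauliString_zero] at this
  simpa using this

lemma smul_cancel_vec {N : ℕ} {a b : ℂ} {ψ : (Fin N → Fin 2) → ℂ} (hψ : ψ ≠ 0)
    (h : a • ψ = b • ψ) : a = b := by
  obtain ⟨x, hx⟩ := Function.ne_iff.mp hψ
  have hx' : ψ x ≠ 0 := hx
  have := congrFun h x
  simp only [Pi.smul_apply, smul_eq_mul] at this
  exact mul_right_cancel₀ hx' this

lemma pauliString_mulVec_sq {N : ℕ} (α : Fin N → Fin 4) (v : (Fin N → Fin 2) → ℂ) :
    pauliString α *ᵥ (pauliString α *ᵥ v) = v := by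
  rw [Matrix.mulVec_mulVec, pauliString_sq, Matrix.one_mulVec]

lemma eigen_phase {N : ℕ} {ψ : (Fin N → Fin 2) → ℂ} (hψ : ψ ≠ 0) {γ : Fin N → Fin 4}
    {c ε : ℂ} (hc : IsPhase c) (hε : ε = 1 ∨ ε = -1)
    (h : c • (pauliString γ *ᵥ ψ) = ε • ψ) :
    pauliString γ *ᵥ ψ = ψ ∨ pauliString γ *ᵥ ψ = -ψ := by
  have h2 : c • ψ = ε • (pauliString γ *ᵥ ψ) := by
    have h' := congrArg (fun v => pauliString γ *ᵥ v) h
    simpa [Matrix.mulVec_smul, Matrix.mulVec_mulVec, pauliString_sq, Matrix.one_mulVec] using h'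
  have h3 : (c * c) • ψ = (ε * ε) • ψ := by
    calc (c * c) • ψ = c • (c • ψ) := mul_smul c c ψ
      _ = c • (ε • (pauliString γ *ᵥ ψ)) := by rw [h2]
      _ = ε • (c • (pauliString γ *ᵥ ψ)) := smul_comm c ε _
      _ = ε • (ε • ψ) := by rw [h]
      _ = (ε * ε) • ψ := (mul_smul ε ε ψ).symm
  have hc2 : c * c = ε * ε := smul_cancel_vec hψ h3
  have hε2 : ε * ε = 1 := by rcases hε with rfl | rfl <;> norm_num
  have hcpm := hc.sq_one (by rw [sq, hc2, hε2])
  rcases hcpm with rfl | rfl <;> rcases hε with rfl | rfl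
  · left; simpa using h
  · right; simpa [neg_smul, one_smul] using h
  · right
    have h4 : -(pauliString γ *ᵥ ψ) = ψ := by simpa [neg_smul] using h
    exact neg_eq_iff_eq_neg.mp h4
  · left
    have h4 : -(pauliString γ *ᵥ ψ) = -ψ := by simpa [neg_smul] using h
    exact neg_inj.mp h4

def stabSet {N : ℕ} (ψ : (Fin N → Fin 2) → ℂ) : Set (Fin N → Fin 4) :=
  {α | pauliString α *ᵥ ψ = ψ ∨ pauliString α *ᵥ ψ = -ψ}

lemma mem_stabSet_iff {N : ℕ} {ψ : (Fin N → Fin 2) → ℂ} {α : Fin N → Fin 4} :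
    α ∈ stabSet ψ ↔ ∃ ε : ℂ, (ε = 1 ∨ ε = -1) ∧ pauliString α *ᵥ ψ = ε • ψ := by
  constructor
  · rintro (h | h)
    · exact ⟨1, Or.inl rfl, by simpa using h⟩
    · exact ⟨-1, Or.inr rfl, by simpa [neg_smul] using h⟩
  · rintro ⟨ε, (rfl | rfl), h⟩
    · exact Or.inl (by simpa using h)
    · exact Or.inr (by simpa [neg_smul] using h)

lemma pauliString_injective {N : ℕ} : Function.Injective (pauliString (N := N)) := by
  intro α β h
  rw [← one_smul ℂ (pauliString β)] at h
  exact (pauliString_rigid h).1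

lemma stabGroup_eq_image {N : ℕ} (ψ : (Fin N → Fin 2) → ℂ) :
    stabGroup ψ = pauliString '' (stabSet ψ) := by
  ext σ
  constructor
  · rintro ⟨⟨α, rfl⟩, h⟩
    exact ⟨α, h, rfl⟩
  · rintro ⟨α, hα, rfl⟩
    exact ⟨⟨α, rfl⟩, hα⟩

lemma natCard_stabGroup {N : ℕ} (ψ : (Fin N → Fin 2) → ℂ) :
    Nat.card (stabGroup ψ) = (stabSet ψ).ncard := by
  rw [Nat.card_coe_set_eq, stabGroup_eq_image,
    Set.ncard_image_of_injective _ pauliString_injective]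

lemma mulVec_ne_zero_of_unitary {N : ℕ} {U : Matrix (Fin N → Fin 2) (Fin N → Fin 2) ℂ}
    (hU : U ∈ Matrix.unitaryGroup (Fin N → Fin 2) ℂ) {ψ : (Fin N → Fin 2) → ℂ}
    (hψ : ψ ≠ 0) : U *ᵥ ψ ≠ 0 := by
  intro h0
  apply hψ
  have h1 : Uᴴ * U = 1 := by
    have := hU.1
    rwa [Matrix.star_eq_conjTranspose] at this
  calc ψ = (Uᴴ * U) *ᵥ ψ := by rw [h1, Matrix.one_mulVec]
    _ = Uᴴ *ᵥ (U *ᵥ ψ) := (Matrix.mulVec_mulVec _ _ _).symm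
    _ = 0 := by rw [h0, Matrix.mulVec_zero]

lemma clifford_step {N : ℕ} {U : Matrix (Fin N → Fin 2) (Fin N → Fin 2) ℂ}
    (hU : IsClifford U) {ψ : (Fin N → Fin 2) → ℂ} (hψ : ψ ≠ 0) :
    (stabSet ψ).ncard ≤ (stabSet (U *ᵥ ψ)).ncard := by
  classical
  have hUU : Uᴴ * U = 1 := by
    have := hU.1.1
    rwa [Matrix.star_eq_conjTranspose] at this
  have hUU' : U * Uᴴ = 1 := by
    have := hU.1.2
    rwa [Matrix.star_eq_conjTranspose] at this
  have hψ' : U *ᵥ ψ ≠ 0 := mulVec_ne_zero_of_unitary hU.1 hψ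
  set f : (Fin N → Fin 4) → (Fin N → Fin 4) := fun α => (hU.2 α).choose with hf
  have hspec : ∀ α, ∃ c : ℂ, IsPhase c ∧ U * pauliString α * Uᴴ = c • pauliString (f α) :=
    fun α => (hU.2 α).choose_spec
  apply Set.ncard_le_ncard_of_injOn f
  · intro α hα
    obtain ⟨c, hc, hUc⟩ := hspec α
    obtain ⟨ε, hε, hεα⟩ := mem_stabSet_iff.mp hα
    rw [mem_stabSet_iff]
    refine mem_stabSet_iff.mp (eigen_phase hψ' hc hε ?_)
    calc c • (pauliString (f α) *ᵥ (U *ᵥ ψ))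
        = (c • pauliString (f α)) *ᵥ (U *ᵥ ψ) := (Matrix.smul_mulVec _ _ _).symm
      _ = (U * pauliString α * Uᴴ) *ᵥ (U *ᵥ ψ) := by rw [hUc]
      _ = (U * pauliString α * Uᴴ * U) *ᵥ ψ := Matrix.mulVec_mulVec _ _ _
      _ = (U * pauliString α) *ᵥ ψ := by rw [mul_assoc (U * pauliString α), hUU, mul_one]
      _ = U *ᵥ (pauliString α *ᵥ ψ) := (Matrix.mulVec_mulVec _ _ _).symm
      _ = U *ᵥ (ε • ψ) := by rw [hεα]
      _ = ε • (U *ᵥ ψ) := Matrix.mulVec_smul _ _ _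
  · intro α₁ h₁ α₂ h₂ heq
    obtain ⟨c₁, hc₁, hU₁⟩ := hspec α₁
    obtain ⟨c₂, hc₂, hU₂⟩ := hspec α₂
    rw [heq] at hU₁
    have key : ∀ (α : Fin N → Fin 4) (c : ℂ),
        U * pauliString α * Uᴴ = c • pauliString (f α₂) →
        pauliString α = c • (Uᴴ * pauliString (f α₂) * U) := by
      intro α c hc
      calc pauliString α = (Uᴴ * U) * pauliString α * (Uᴴ * U) := by
            rw [hUU, one_mul, mul_one]
        _ = Uᴴ * (U * pauliString α * Uᴴ) * U := by simp only [mul_assoc]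
        _ = c • (Uᴴ * pauliString (f α₂) * U) := by
            rw [hc, Matrix.mul_smul, Matrix.smul_mul]
    have k₁ := key α₁ c₁ hU₁
    have k₂ := key α₂ c₂ hU₂
    have h12 : pauliString α₁ = (c₁ * c₂⁻¹) • pauliString α₂ := by
      rw [k₂, smul_smul, mul_assoc, inv_mul_cancel₀ hc₂.ne_zero, mul_one]
      exact k₁
    exact (pauliString_rigid h12).1

lemma pmul_x {a b : Fin 4} (ha : ¬(a = 0 ∨ a = 3)) (hb : ¬(b = 0 ∨ b = 3)) :
    pmul a b = 0 ∨ pmul a b = 3 := by revert a b; decide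

lemma tgate_comm {N : ℕ} (i : Fin N) {α : Fin N → Fin 4} (h : α i = 0 ∨ α i = 3) :
    Tgate i * pauliString α = pauliString α * Tgate i := by
  ext s s'
  rw [Tgate, Matrix.diagonal_mul, Matrix.mul_diagonal]
  by_cases hss : s i = s' i
  · rw [hss, mul_comm]
  · have h0 : pauliString α s s' = 0 :=
      Finset.prod_eq_zero (Finset.mem_univ i) (pauli_diag h hss)
    rw [h0, mul_zero, zero_mul]

lemma pm_mul {ε₀ ε₁ : ℂ} (h₀ : ε₀ = 1 ∨ ε₀ = -1) (h₁ : ε₁ = 1 ∨ ε₁ = -1) :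
    ε₀ * ε₁ = 1 ∨ ε₀ * ε₁ = -1 := by
  rcases h₀ with rfl | rfl <;> rcases h₁ with rfl | rfl <;> norm_num

lemma prod_step {N : ℕ} {ψ : (Fin N → Fin 2) → ℂ} (hψ : ψ ≠ 0) {α₀ α : Fin N → Fin 4}
    (h₀ : α₀ ∈ stabSet ψ) (h₁ : α ∈ stabSet ψ) :
    (fun j => pmul (α₀ j) (α j)) ∈ stabSet ψ := by
  obtain ⟨ε₀, hε₀, hv₀⟩ := mem_stabSet_iff.mp h₀
  obtain ⟨ε₁, hε₁, hv₁⟩ := mem_stabSet_iff.mp h₁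
  refine eigen_phase hψ (isPhase_prod α₀ α) (pm_mul hε₀ hε₁) ?_
  calc (∏ j, pphase (α₀ j) (α j)) • (pauliString (fun j => pmul (α₀ j) (α j)) *ᵥ ψ)
      = ((∏ j, pphase (α₀ j) (α j)) • pauliString (fun j => pmul (α₀ j) (α j))) *ᵥ ψ :=
        (Matrix.smul_mulVec _ _ _).symm
    _ = (pauliString α₀ * pauliString α) *ᵥ ψ := by rw [← pauliString_mul]
    _ = pauliString α₀ *ᵥ (pauliString α *ᵥ ψ) := (Matrix.mulVec_mulVec _ _ _).symm
    _ = pauliString α₀ *ᵥ (ε₁ • ψ) := by rw [hv₁]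
    _ = ε₁ • (pauliString α₀ *ᵥ ψ) := Matrix.mulVec_smul _ _ _
    _ = ε₁ • (ε₀ • ψ) := by rw [hv₀]
    _ = (ε₀ * ε₁) • ψ := by rw [smul_smul, mul_comm]

lemma prod_injOn {N : ℕ} (α₀ : Fin N → Fin 4) {s : Set (Fin N → Fin 4)} :
    Set.InjOn (fun α j => pmul (α₀ j) (α j)) s := by
  intro α₁ _ α₂ _ heq
  have e₁ := pauliString_mul α₀ α₁
  have e₂ := pauliString_mul α₀ α₂
  simp only [heq] at e₁
  set d₁ := ∏ j, pphase (α₀ j) (α₁ j) with hd₁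
  set d₂ := ∏ j, pphase (α₀ j) (α₂ j) with hd₂
  have k : ∀ (α : Fin N → Fin 4) (d : ℂ),
      pauliString α₀ * pauliString α = d • pauliString (fun j => pmul (α₀ j) (α₂ j)) →
      pauliString α = d • (pauliString α₀ * pauliString (fun j => pmul (α₀ j) (α₂ j))) := by
    intro α d hd
    calc pauliString α = (pauliString α₀ * pauliString α₀) * pauliString α := by
          rw [pauliString_sq, one_mul]
      _ = pauliString α₀ * (pauliString α₀ * pauliString α) := by rw [mul_assoc]
      _ = d • (pauliString α₀ * pauliString (fun j => pmul (α₀ j) (α₂ j))) := by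
          rw [hd, Matrix.mul_smul]
  have k₁ := k α₁ d₁ e₁
  have k₂ := k α₂ d₂ e₂
  have hd₂0 : d₂ ≠ 0 := (isPhase_prod α₀ α₂).ne_zero
  have h12 : pauliString α₁ = (d₁ * d₂⁻¹) • pauliString α₂ := by
    rw [k₂, smul_smul, mul_assoc, inv_mul_cancel₀ hd₂0, mul_one]
    exact k₁
  exact (pauliString_rigid h12).1

lemma tgate_step {N : ℕ} (i : Fin N) {ψ : (Fin N → Fin 2) → ℂ} (hψ : ψ ≠ 0) :
    (stabSet ψ).ncard ≤ 2 * (stabSet (Tgate i *ᵥ ψ)).ncard := by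
  classical
  set sz : Set (Fin N → Fin 4) := {α | α ∈ stabSet ψ ∧ (α i = 0 ∨ α i = 3)} with hsz
  have hszsub : sz ⊆ stabSet ψ := fun α hα => hα.1
  have hsub : sz ⊆ stabSet (Tgate i *ᵥ ψ) := by
    rintro α ⟨hα, hi⟩
    obtain ⟨ε, hε, hεα⟩ := mem_stabSet_iff.mp hα
    refine mem_stabSet_iff.mpr ⟨ε, hε, ?_⟩
    calc pauliString α *ᵥ (Tgate i *ᵥ ψ)
        = (pauliString α * Tgate i) *ᵥ ψ := Matrix.mulVec_mulVec _ _ _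
      _ = (Tgate i * pauliString α) *ᵥ ψ := by rw [tgate_comm i hi]
      _ = Tgate i *ᵥ (pauliString α *ᵥ ψ) := (Matrix.mulVec_mulVec _ _ _).symm
      _ = Tgate i *ᵥ (ε • ψ) := by rw [hεα]
      _ = ε • (Tgate i *ᵥ ψ) := Matrix.mulVec_smul _ _ _
  have hdiff : (stabSet ψ \ sz).ncard ≤ sz.ncard := by
    rcases Set.eq_empty_or_nonempty (stabSet ψ \ sz) with he | ⟨α₀, hα₀s, hα₀z⟩
    · simp [he]
    · apply Set.ncard_le_ncard_of_injOn (fun α j => pmul (α₀ j) (α j))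
      · rintro α ⟨hαs, hαz⟩
        have hx0 : ¬(α₀ i = 0 ∨ α₀ i = 3) := fun hc => hα₀z ⟨hα₀s, hc⟩
        have hxa : ¬(α i = 0 ∨ α i = 3) := fun hc => hαz ⟨hαs, hc⟩
        exact ⟨prod_step hψ hα₀s hαs, pmul_x hx0 hxa⟩
      · exact (prod_injOn α₀).mono Set.diff_subset
  have heq := Set.ncard_diff_add_ncard_of_subset hszsub (Set.toFinite _)
  have hmono : sz.ncard ≤ (stabSet (Tgate i *ᵥ ψ)).ncard :=
    Set.ncard_le_ncard hsub (Set.toFinite _)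
  omega

lemma zeroState_ne_zero (N : ℕ) : zeroState N ≠ 0 := by
  intro h
  have := congrFun h (fun _ => 0)
  simp [zeroState] at this

lemma stabSet_nonempty {N : ℕ} (ψ : (Fin N → Fin 2) → ℂ) : (stabSet ψ).Nonempty := by
  refine ⟨fun _ => 0, Or.inl ?_⟩
  rw [pauliString_zero, Matrix.one_mulVec]

lemma base_card (N : ℕ) : 2 ^ N ≤ (stabSet (zeroState N)).ncard := by
  classical
  set e : (Fin N → Fin 2) → (Fin N → Fin 4) := fun f j => if f j = 0 then 0 else 3 with he
  have hinj : Function.Injective e := by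
    intro f g h
    funext j
    have hj := congrFun h j
    have key : ∀ a b : Fin 2, (if a = 0 then (0 : Fin 4) else 3) = (if b = 0 then 0 else 3)
        → a = b := by decide
    exact key _ _ hj
  have hmem : ∀ f, e f ∈ stabSet (zeroState N) := by
    intro f
    left
    funext s
    rw [Matrix.mulVec]
    show (∑ s', pauliString (e f) s s' * zeroState N s') = zeroState N s
    rw [Finset.sum_eq_single (fun _ => (0 : Fin 2))]
    · have hcol : pauliString (e f) s (fun _ => 0) = if s = fun _ => 0 then 1 else 0 := by
        rw [pauliString_apply]
        by_cases hs : s = fun _ => 0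
        · subst hs
          rw [if_pos rfl]
          refine Finset.prod_eq_one fun j _ => ?_
          rw [pauli_col_zero (show e f j = 0 ∨ e f j = 3 by by_cases h : f j = 0 <;> simp [he, h]) _]
          simp
        · rw [if_neg hs]
          obtain ⟨j, hj⟩ := Function.ne_iff.mp hs
          refine Finset.prod_eq_zero (Finset.mem_univ j) ?_
          rw [pauli_col_zero (show e f j = 0 ∨ e f j = 3 by by_cases h : f j = 0 <;> simp [he, h]) _]
          simp [hj]
      simp [zeroState, hcol]
    · intro s' _ hs'
      simp [zeroState, hs']
    · simp
  calc 2 ^ N = (Set.univ : Set (Fin N → Fin 2)).ncard := by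
        rw [Set.ncard_univ, Nat.card_eq_fintype_card]
        simp
    _ = (e '' Set.univ).ncard := (Set.ncard_image_of_injective _ hinj).symm
    _ ≤ (stabSet (zeroState N)).ncard := by
        refine Set.ncard_le_ncard ?_ (Set.toFinite _)
        rintro β ⟨f, _, rfl⟩
        exact hmem f

lemma tgate_mulVec_ne_zero {N : ℕ} (i : Fin N) {ψ : (Fin N → Fin 2) → ℂ} (hψ : ψ ≠ 0) :
    Tgate i *ᵥ ψ ≠ 0 := by
  intro h0
  apply hψ
  set D : Matrix (Fin N → Fin 2) (Fin N → Fin 2) ℂ :=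
    Matrix.diagonal fun s => if s i = 1 then Complex.exp (-(Complex.I * Real.pi / 4)) else 1
    with hD
  have hDT : D * Tgate i = 1 := by
    rw [hD, Tgate, Matrix.diagonal_mul_diagonal]
    have hfun : (fun s : Fin N → Fin 2 =>
        (if s i = 1 then Complex.exp (-(Complex.I * Real.pi / 4)) else 1) *
          (if s i = 1 then Complex.exp (Complex.I * Real.pi / 4) else 1)) = fun _ => (1 : ℂ) := by
      funext s
      by_cases hs : s i = 1 <;> simp [hs, ← Complex.exp_add]
    rw [hfun, Matrix.diagonal_one]
  calc ψ = (D * Tgate i) *ᵥ ψ := by rw [hDT, Matrix.one_mulVec]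
    _ = D *ᵥ (Tgate i *ᵥ ψ) := (Matrix.mulVec_mulVec _ _ _).symm
    _ = 0 := by rw [h0, Matrix.mulVec_zero]

theorem stabGroup_card_tDoped {N t : ℕ}
    (C : ℕ → Matrix (Fin N → Fin 2) (Fin N → Fin 2) ℂ)
    (idx : ℕ → Fin N)
    (hC : ∀ j ≤ t, IsClifford (C j))
    (φ : ℕ → (Fin N → Fin 2) → ℂ)
    (hφ0 : φ 0 = C 0 *ᵥ zeroState N)
    (hφ : ∀ j < t, φ (j + 1) = C (j + 1) *ᵥ (Tgate (idx (j + 1)) *ᵥ φ j))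
    (ψ : (Fin N → Fin 2) → ℂ) (hψ : ψ = φ t) :
    2 ^ (N - t) ≤ Nat.card (stabGroup ψ) := by
  have main : ∀ j ≤ t, φ j ≠ 0 ∧ 2 ^ (N - j) ≤ (stabSet (φ j)).ncard := by
    intro j
    induction j with
    | zero =>
      intro _
      have h0 := (hC 0 (Nat.zero_le t)).1
      constructor
      · rw [hφ0]; exact mulVec_ne_zero_of_unitary h0 (zeroState_ne_zero N)
      · rw [hφ0, Nat.sub_zero]
        exact le_trans (base_card N)
          (clifford_step (hC 0 (Nat.zero_le t)) (zeroState_ne_zero N))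
    | succ j ih =>
      intro hjt
      have hjt' : j < t := hjt
      obtain ⟨hne, hcard⟩ := ih (le_of_lt hjt')
      have hTne : Tgate (idx (j + 1)) *ᵥ φ j ≠ 0 := tgate_mulVec_ne_zero _ hne
      have hCj := hC (j + 1) hjt
      have hφj1 := hφ j hjt'
      have hne' : φ (j + 1) ≠ 0 := by
        rw [hφj1]; exact mulVec_ne_zero_of_unitary hCj.1 hTne
      refine ⟨hne', ?_⟩
      have hc1 : (stabSet (φ j)).ncard ≤ 2 * (stabSet (Tgate (idx (j + 1)) *ᵥ φ j)).ncard :=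
        tgate_step (idx (j + 1)) hne
      have hc2 : (stabSet (Tgate (idx (j + 1)) *ᵥ φ j)).ncard
          ≤ (stabSet (φ (j + 1))).ncard := by
        rw [hφj1]; exact clifford_step hCj hTne
      by_cases hNj : N ≤ j
      · have : N - (j + 1) = 0 := by omega
        rw [this, pow_zero]
        rw [Nat.one_le_iff_ne_zero, ← Nat.pos_iff_ne_zero, Set.ncard_pos (Set.toFinite _)]
        exact stabSet_nonempty _
      · have hpow : 2 ^ (N - j) = 2 * 2 ^ (N - (j + 1)) := by
          rw [← pow_succ']
          congr 1
          omega
        omega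
  rw [hψ, natCard_stabGroup]
  exact (main t le_rfl).2
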